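/- Let A be a K-algebra and V a simple right A-module. If dim_K End_A(V) < #K, then the division ring End_A(V) is algebraic over K. -/

import Mathlib

open Polynomial

/-- Division ring version of `Transcendental.linearIndependent_sub_inv`. -/
theorem linearIndependent_sub_inv_divisionRing
    {F E : Type*} [Field F] [DivisionRing E] [Algebra F E] {x : E} (H : Transcendental F x) :
    LinearIndependent F fun a ↦ (x - algebraMap F E a)⁻¹ := by
  classical
  rw [transcendental_iff] at H
  refine linearIndependent_iff'.2 fun s m hm i hi ↦ ?_
  have hnz (a : F) : x - algebraMap F E a ≠ 0 := fun h ↦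
    X_sub_C_ne_zero a <| H (X - C a) (by simp [h])
  let b : E := aeval x (s.prod fun j ↦ (X : F[X]) - C j)
  have h1 : ∀ i ∈ s, m i • (b * (x - algebraMap F E i)⁻¹) =
      m i • aeval x ((s.erase i).prod fun j ↦ (X : F[X]) - C j) := fun i hi ↦ by
    simp only [b]; rw [← s.prod_erase_mul _ hi, map_mul, map_sub, aeval_X, aeval_C,
      mul_inv_cancel_right₀ (hnz i)]
  replace hm := congr(b * $(hm))
  simp_rw [mul_zero, Finset.mul_sum, mul_smul_comm, Finset.sum_congr rfl h1] at hm
  let p : Polynomial F := s.sum fun i ↦ .C (m i) * (s.erase i).prod fun j ↦ .X - .C j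
  replace hm := congr(Polynomial.aeval i $(H p (by simp_rw [← hm, p, map_sum, map_mul,
    aeval_C, Algebra.smul_def])))
  have h2 : ∀ j ∈ s.erase i, m j * ((s.erase j).prod fun x ↦ i - x) = 0 := fun j hj ↦ by
    have := Finset.mem_erase_of_ne_of_mem (Finset.ne_of_mem_erase hj).symm hi
    simp_rw [← (s.erase j).prod_erase_mul _ this, sub_self, mul_zero]
  simp_rw [map_zero, p, map_sum, map_mul, map_prod, map_sub, aeval_X,
    aeval_C, Algebra.algebraMap_self_apply, ← s.sum_erase_add _ hi,
    Finset.sum_eq_zero h2, zero_add] at hm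
  exact eq_zero_of_ne_zero_of_mul_right_eq_zero (Finset.prod_ne_zero_iff.2 fun j hj ↦
    sub_ne_zero.2 (Finset.ne_of_mem_erase hj).symm) hm

universe u v w

/-- Let `A` be a `K`-algebra and `V` a simple right `A`-module.  If
`dim_K End_A(V) < #K`, then the division ring `End_A(V)` is algebraic over `K`:
every endomorphism satisfies a nonzero polynomial over `K`.  Right `A`-modules are
modules over the opposite ring `Aᵐᵒᵖ`. -/
theorem endomorphism_ring_algebraic_of_rank_lt (K : Type u) (A : Type v) [Field K] [Ring A]
    [Algebra K A] (V : Type w) [AddCommGroup V] [Module K V] [Module Aᵐᵒᵖ V]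
    [IsScalarTower K Aᵐᵒᵖ V] [SMulCommClass Aᵐᵒᵖ K V]
    (hsimple : IsSimpleModule Aᵐᵒᵖ V)
    (hdim : Cardinal.lift.{u} (Module.rank K (Module.End Aᵐᵒᵖ V)) <
      Cardinal.lift.{w} (Cardinal.mk K)) :
    ∀ φ : Module.End Aᵐᵒᵖ V, IsAlgebraic K φ := by
  classical
  intro φ
  by_contra hφ
  have h := (linearIndependent_sub_inv_divisionRing
    (E := Module.End Aᵐᵒᵖ V) (F := K) hφ).cardinal_lift_le_rank
  exact absurd (h.trans_lt hdim) (lt_irrefl _)
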